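/- arXiv:2308.13819 — 7 statements merged into one kernel-verified Lean document; each statement's English description precedes it below -/
import Mathlib

section
/- Let A = (J - R)Q where J ∈ ℝ^{n×n} is skew-symmetric, R ∈ ℝ^{n×n} is symmetric positive definite, and Q ∈ ℝ^{n×n} is symmetric positive definite. Then every eigenvalue λ of A satisfies Re(λ) < 0. -/
open Matrix

private lemma re_quad (n : ℕ) (M : Matrix (Fin n) (Fin n) ℝ) (w : Fin n → ℂ) :
    (star w ⬝ᵥ (M.map (fun r : ℝ => (r : ℂ))) *ᵥ w).re
      = (fun i => (w i).re) ⬝ᵥ M *ᵥ (fun i => (w i).re)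
        + (fun i => (w i).im) ⬝ᵥ M *ᵥ (fun i => (w i).im) := by
  simp only [dotProduct, mulVec, Pi.star_apply, Matrix.map_apply, Complex.re_sum,
    Finset.mul_sum, ← Finset.sum_add_distrib]
  refine Finset.sum_congr rfl fun i _ => ?_
  refine Finset.sum_congr rfl fun j _ => ?_
  simp [Complex.mul_re, Complex.mul_im]

private lemma im_quad (n : ℕ) (M : Matrix (Fin n) (Fin n) ℝ) (w : Fin n → ℂ) :
    (star w ⬝ᵥ (M.map (fun r : ℝ => (r : ℂ))) *ᵥ w).im
      = (fun i => (w i).re) ⬝ᵥ M *ᵥ (fun i => (w i).im)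
        - (fun i => (w i).im) ⬝ᵥ M *ᵥ (fun i => (w i).re) := by
  simp only [dotProduct, mulVec, Pi.star_apply, Matrix.map_apply, Complex.im_sum,
    Finset.mul_sum, ← Finset.sum_sub_distrib]
  refine Finset.sum_congr rfl fun i _ => ?_
  refine Finset.sum_congr rfl fun j _ => ?_
  simp [Complex.mul_re, Complex.mul_im]
  ring

private lemma skew_quad (n : ℕ) (J : Matrix (Fin n) (Fin n) ℝ) (hJ : Jᵀ = -J)
    (x : Fin n → ℝ) : x ⬝ᵥ J *ᵥ x = 0 := by
  have h : x ⬝ᵥ J *ᵥ x = -(x ⬝ᵥ J *ᵥ x) := by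
    calc x ⬝ᵥ J *ᵥ x = (Jᵀ *ᵥ x) ⬝ᵥ x := by rw [dotProduct_mulVec, mulVec_transpose]
    _ = (-(J *ᵥ x)) ⬝ᵥ x := by rw [hJ, neg_mulVec]
    _ = -(x ⬝ᵥ J *ᵥ x) := by rw [neg_dotProduct, dotProduct_comm]
  linarith

private lemma symm_quad (n : ℕ) (M : Matrix (Fin n) (Fin n) ℝ) (hM : Mᵀ = M)
    (x y : Fin n → ℝ) : x ⬝ᵥ M *ᵥ y = y ⬝ᵥ M *ᵥ x := by
  rw [dotProduct_mulVec, ← mulVec_transpose, hM, dotProduct_comm]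

/-- For `A = (J - R)Q` with `J` skew-symmetric and `R, Q` symmetric positive
definite, every (complex) eigenvalue of `A` has strictly negative real part. -/
theorem stmt_3 (n : ℕ) (J R Q : Matrix (Fin n) (Fin n) ℝ)
    (hJ : Jᵀ = -J) (hR : R.PosDef) (hQ : Q.PosDef)
    (μ : ℂ) (v : Fin n → ℂ) (hv : v ≠ 0)
    (heig : (((J - R) * Q).map (fun r : ℝ => (r : ℂ))).mulVec v = μ • v) :
    μ.re < 0 := by
  have hQsymm : Qᵀ = Q := hQ.1
  have hRsymm : Rᵀ = R := hR.1
  set c : ℝ → ℂ := fun r : ℝ => (r : ℂ) with hc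
  set f : ℝ →+* ℂ := Complex.ofRealHom with hf
  have hmap : ((J - R) * Q).map c = ((J - R).map c) * (Q.map c) :=
    Matrix.map_mul (f := f)
  set w : Fin n → ℂ := (Q.map c) *ᵥ v with hwdef
  -- positivity of the real quadratic form, given a nonzero pair
  have posQuad : ∀ (M : Matrix (Fin n) (Fin n) ℝ), M.PosDef → ∀ u : Fin n → ℂ, u ≠ 0 →
      0 < (star u ⬝ᵥ (M.map c) *ᵥ u).re := by
    intro M hM u hu
    rw [re_quad]
    set a : Fin n → ℝ := fun i => (u i).re
    set b : Fin n → ℝ := fun i => (u i).im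
    have hab : a ≠ 0 ∨ b ≠ 0 := by
      by_contra h
      push_neg at h
      apply hu
      funext i
      have ha := congrFun h.1 i
      have hb := congrFun h.2 i
      exact Complex.ext ha hb
    have h1 : ∀ x : Fin n → ℝ, 0 ≤ x ⬝ᵥ M *ᵥ x := fun x => by simpa using hM.posSemidef.dotProduct_mulVec_nonneg x
    have h2 : ∀ x : Fin n → ℝ, x ≠ 0 → 0 < x ⬝ᵥ M *ᵥ x := fun x hx => by simpa using hM.dotProduct_mulVec_pos hx
    rcases hab with h | h
    · exact add_pos_of_pos_of_nonneg (h2 a h) (h1 b)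
    · exact add_pos_of_nonneg_of_pos (h1 a) (h2 b h)
  -- q := vᴴ Q v is a positive real number
  set q : ℂ := star v ⬝ᵥ (Q.map c) *ᵥ v with hqdef
  have hqre : 0 < q.re := posQuad Q hQ v hv
  have hqim : q.im = 0 := by
    rw [hqdef, im_quad, symm_quad n Q hQsymm]; ring
  -- key identity
  have hQherm : (Q.map c)ᴴ = Q.map c := by
    ext i j
    have h : Q j i = Q i j := congrFun (congrFun hQsymm i) j
    simp only [conjTranspose_apply, Matrix.map_apply]
    rw [Complex.star_def, Complex.conj_ofReal, h]
  have hstarw : star w = star v ᵥ* (Q.map c) := by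
    rw [hwdef, star_mulVec, hQherm]
  have key : star w ⬝ᵥ ((J - R).map c) *ᵥ w = μ * q := by
    have h1 : ((J - R).map c) *ᵥ w = μ • v := by
      rw [hwdef, mulVec_mulVec, ← hmap, heig]
    rw [h1, dotProduct_smul, smul_eq_mul, hstarw, hqdef, ← dotProduct_mulVec]
  -- take real parts
  have hre : (star w ⬝ᵥ ((J - R).map c) *ᵥ w).re < 0 := by
    have hw0 : w ≠ 0 := by
      intro h
      have : q = 0 := by
        rw [hqdef, ← hwdef, h, dotProduct_zero]
      rw [this] at hqre
      simp at hqre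
    have hsplit : (J - R).map c = J.map c - R.map c := Matrix.map_sub c (by simp [hc]) J R
    rw [hsplit, sub_mulVec, dotProduct_sub, Complex.sub_re]
    have hJre : (star w ⬝ᵥ (J.map c) *ᵥ w).re = 0 := by
      rw [re_quad, skew_quad n J hJ, skew_quad n J hJ]; ring
    have hRre : 0 < (star w ⬝ᵥ (R.map c) *ᵥ w).re := posQuad R hR w hw0
    linarith
  rw [key, Complex.mul_re, hqim, mul_zero, sub_zero] at hre
  nlinarith
end

section
/- Consider the quadratic ODE ẋ(t) = Ax(t) + H(x(t) ⊗ x(t)) where A = (J - R)Q with J skew-symmetric and R, Q symmetric positive definite, and H ∈ ℝ^{n×n²}. Let V(x) = ½ xᵀQx. Then along any solution x(t), the derivative of V satisfies d/dt V(x(t)) ≤ -σ_min(L)² ‖x(t)‖₂² + ‖Q‖₂ ‖H‖₂ ‖x(t)‖₂³, where L satisfies LLᵀ = QᵀRQ and σ_min(L) is the smallest singular value of L. In particular, d/dt V(x(t)) < 0 whenever 0 < ‖x(t)‖₂ < σ_min(L)²/(‖Q‖₂‖H‖₂). -/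
open Matrix

/-- Along solutions of `ẋ = (J-R)Qx + H(x⊗x)` the Lyapunov candidate
`V(x) = ½ xᵀQx` satisfies
`d/dt V(x(t)) ≤ -σ_min(L)²‖x(t)‖² + ‖Q‖₂‖H‖₂‖x(t)‖³`, where `LLᵀ = QᵀRQ`;
in particular `d/dt V(x(t)) < 0` whenever `0 < ‖x(t)‖ < σ_min(L)²/(‖Q‖₂‖H‖₂)`. -/
theorem stmt_4 (n : ℕ) (J R Q L : Matrix (Fin n) (Fin n) ℝ)
    (H : Matrix (Fin n) (Fin n × Fin n) ℝ)
    (hJ : Jᵀ = -J) (hR : R.PosDef) (hQ : Q.PosDef)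
    (hL : L * Lᵀ = Qᵀ * R * Q)
    (σ q h : ℝ) (hσ0 : 0 ≤ σ) (hq0 : 0 ≤ q) (hh0 : 0 ≤ h)
    -- `σ` is the smallest singular value of `L`:
    (hσ : ∀ v : Fin n → ℝ, σ ^ 2 * ∑ i, v i ^ 2 ≤ v ⬝ᵥ (L * Lᵀ).mulVec v)
    -- `q` is (an upper bound for) the spectral norm of `Q`:
    (hq : ∀ v : Fin n → ℝ, ∑ i, (Q.mulVec v) i ^ 2 ≤ q ^ 2 * ∑ i, v i ^ 2)
    -- `h` is (an upper bound for) the spectral norm of `H`: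
    (hh : ∀ w : Fin n × Fin n → ℝ, ∑ i, (H.mulVec w) i ^ 2 ≤ h ^ 2 * ∑ p, w p ^ 2)
    (x : ℝ → Fin n → ℝ)
    (hx : ∀ t, HasDerivAt x
      (((J - R) * Q).mulVec (x t) + H.mulVec (fun p => x t p.1 * x t p.2)) t) :
    ∀ t,
      deriv (fun s => (1 / 2 : ℝ) * (x s ⬝ᵥ Q.mulVec (x s))) t
        ≤ -σ ^ 2 * (∑ i, (x t i) ^ 2)
          + q * h * (Real.sqrt (∑ i, (x t i) ^ 2)) ^ 3 ∧
      ((0 < Real.sqrt (∑ i, (x t i) ^ 2) ∧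
          Real.sqrt (∑ i, (x t i) ^ 2) < σ ^ 2 / (q * h)) →
        deriv (fun s => (1 / 2 : ℝ) * (x s ⬝ᵥ Q.mulVec (x s))) t < 0) := by
  intro t
  have hQsym : Qᵀ = Q := by
    have := hQ.1
    rwa [Matrix.IsHermitian, Matrix.conjTranspose_eq_transpose_of_trivial] at this
  set w : Fin n × Fin n → ℝ := fun p => x t p.1 * x t p.2 with hw
  set v : Fin n → ℝ := ((J - R) * Q).mulVec (x t) + H.mulVec w with hv
  have hxi : ∀ i, HasDerivAt (fun s => x s i) (v i) t := fun i =>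
    (hasDerivAt_pi.mp (hx t)) i
  -- derivative of the quadratic form
  have hg : HasDerivAt (fun s => x s ⬝ᵥ Q.mulVec (x s))
      (∑ i, ∑ j, (v i * (Q i j * x t j) + x t i * (Q i j * v j))) t := by
    have := HasDerivAt.fun_sum (fun i (_ : i ∈ Finset.univ) =>
      HasDerivAt.fun_sum (fun j (_ : j ∈ Finset.univ) =>
        ((hxi i).fun_mul ((hxi j).const_mul (Q i j)))))
    convert this using 2 with s
    · rfl
    · rfl
    simp [dotProduct, mulVec, Finset.mul_sum]
  -- symmetric collapse of the derivative
  have hsum : (1 / 2 : ℝ) * (∑ i, ∑ j, (v i * (Q i j * x t j) + x t i * (Q i j * v j)))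
      = x t ⬝ᵥ Q.mulVec v := by
    have hQij : ∀ i j, Q i j = Q j i := fun i j => by
      conv_lhs => rw [← hQsym]
      exact Matrix.transpose_apply Q i j
    have : (∑ i, ∑ j, v i * (Q i j * x t j)) = ∑ i, ∑ j, x t i * (Q i j * v j) := by
      rw [Finset.sum_comm]
      apply Finset.sum_congr rfl; intro i _
      apply Finset.sum_congr rfl; intro j _
      rw [hQij j i]; ring
    simp only [Finset.sum_add_distrib, this, dotProduct, mulVec, Finset.mul_sum]
    ring
  have hderiv : deriv (fun s => (1 / 2 : ℝ) * (x s ⬝ᵥ Q.mulVec (x s))) t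
      = x t ⬝ᵥ Q.mulVec v := by
    rw [(hg.const_mul (1 / 2 : ℝ)).deriv, hsum]
  -- split the derivative into linear and quadratic contributions
  have hskew : x t ⬝ᵥ (Q * J * Q).mulVec (x t) = 0 := by
    have hS : (Q * J * Q)ᵀ = -(Q * J * Q) := by
      simp [Matrix.transpose_mul, hJ, hQsym, Matrix.mul_assoc, Matrix.neg_mul,
        Matrix.mul_neg]
    have h1 : x t ⬝ᵥ (Q * J * Q).mulVec (x t)
        = -(x t ⬝ᵥ (Q * J * Q).mulVec (x t)) := by
      conv_lhs => rw [Matrix.dotProduct_mulVec, ← Matrix.mulVec_transpose, hS,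
        Matrix.neg_mulVec, neg_dotProduct, dotProduct_comm]
    linarith
  have hsplit : x t ⬝ᵥ Q.mulVec v
      = -(x t ⬝ᵥ (L * Lᵀ).mulVec (x t)) + (Q.mulVec (x t)) ⬝ᵥ (H.mulVec w) := by
    have e0 : Q * ((J - R) * Q) = Q * J * Q - Q * R * Q := by
      noncomm_ring
    have e1 : Q.mulVec (((J - R) * Q).mulVec (x t))
        = (Q * J * Q).mulVec (x t) - (Q * R * Q).mulVec (x t) := by
      rw [Matrix.mulVec_mulVec, e0, Matrix.sub_mulVec]
    have e2 : x t ⬝ᵥ Q.mulVec (H.mulVec w) = (Q.mulVec (x t)) ⬝ᵥ (H.mulVec w) := by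
      rw [Matrix.dotProduct_mulVec, ← Matrix.mulVec_transpose, hQsym]
    rw [hv, Matrix.mulVec_add, dotProduct_add, e1, dotProduct_sub,
      hskew, e2, hL, hQsym]
    ring
  set s : ℝ := ∑ i, x t i ^ 2 with hs
  have hs0 : 0 ≤ s := Finset.sum_nonneg fun i _ => sq_nonneg _
  -- bound the quadratic (cubic) term
  have hws : ∑ p, w p ^ 2 = s ^ 2 := by
    rw [hs, sq, Fintype.sum_prod_type, Finset.sum_mul_sum]
    apply Finset.sum_congr rfl; intro i _
    apply Finset.sum_congr rfl; intro j _
    simp [hw]; ring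
  have hcs : (Q.mulVec (x t)) ⬝ᵥ (H.mulVec w) ≤ q * h * Real.sqrt s ^ 3 := by
    have h1 : (Q.mulVec (x t)) ⬝ᵥ (H.mulVec w)
        ≤ Real.sqrt (∑ i, (Q.mulVec (x t)) i ^ 2) *
          Real.sqrt (∑ i, (H.mulVec w) i ^ 2) :=
      Real.sum_mul_le_sqrt_mul_sqrt _ _ _
    have h2 : Real.sqrt (∑ i, (Q.mulVec (x t)) i ^ 2) ≤ q * Real.sqrt s := by
      have := Real.sqrt_le_sqrt (hq (x t))
      calc Real.sqrt (∑ i, (Q.mulVec (x t)) i ^ 2)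
          ≤ Real.sqrt (q ^ 2 * s) := this
        _ = q * Real.sqrt s := by
            rw [Real.sqrt_mul (sq_nonneg q), Real.sqrt_sq hq0]
    have h3 : Real.sqrt (∑ i, (H.mulVec w) i ^ 2) ≤ h * s := by
      have := Real.sqrt_le_sqrt (hh w)
      calc Real.sqrt (∑ i, (H.mulVec w) i ^ 2)
          ≤ Real.sqrt (h ^ 2 * ∑ p, w p ^ 2) := this
        _ = h * s := by
            rw [hws, Real.sqrt_mul (sq_nonneg h), Real.sqrt_sq hh0, Real.sqrt_sq hs0]
    have h4 : Real.sqrt (∑ i, (Q.mulVec (x t)) i ^ 2) *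
        Real.sqrt (∑ i, (H.mulVec w) i ^ 2) ≤ (q * Real.sqrt s) * (h * s) := by
      apply mul_le_mul h2 h3 (Real.sqrt_nonneg _)
      positivity
    have h6 : Real.sqrt s ^ 3 = s * Real.sqrt s := by
      have h7 : (Real.sqrt s) ^ 2 = s := Real.sq_sqrt hs0
      calc Real.sqrt s ^ 3 = (Real.sqrt s) ^ 2 * Real.sqrt s := by ring
        _ = s * Real.sqrt s := by rw [h7]
    have h5 : (q * Real.sqrt s) * (h * s) = q * h * Real.sqrt s ^ 3 := by
      rw [h6]; ring
    linarith
  have hlin : -(x t ⬝ᵥ (L * Lᵀ).mulVec (x t)) ≤ -σ ^ 2 * s := by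
    have := hσ (x t)
    linarith
  have hmain : deriv (fun s => (1 / 2 : ℝ) * (x s ⬝ᵥ Q.mulVec (x s))) t
      ≤ -σ ^ 2 * s + q * h * Real.sqrt s ^ 3 := by
    rw [hderiv, hsplit]; linarith
  refine ⟨hmain, fun ⟨hpos, hlt⟩ => ?_⟩
  have hqh : 0 < q * h := by
    by_contra hqh
    push_neg at hqh
    have : q * h = 0 := le_antisymm hqh (mul_nonneg hq0 hh0)
    rw [this, div_zero] at hlt
    linarith
  have hspos : 0 < s := by
    have := Real.sqrt_pos.mp hpos
    exact this
  have hlt' : q * h * Real.sqrt s < σ ^ 2 := by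
    rw [lt_div_iff₀ hqh] at hlt
    linarith [hlt]
  have : -σ ^ 2 * s + q * h * Real.sqrt s ^ 3 < 0 := by
    have hsq : Real.sqrt s ^ 3 = s * Real.sqrt s := by
      have h7 : (Real.sqrt s) ^ 2 = s := Real.sq_sqrt hs0
      calc Real.sqrt s ^ 3 = (Real.sqrt s) ^ 2 * Real.sqrt s := by ring
        _ = s * Real.sqrt s := by rw [h7]
    rw [hsq]
    nlinarith [hspos, hlt']
  linarith [hmain]
end

section
/- Let A ∈ ℝ^{n×n} and let Q ∈ ℝ^{n×n} be symmetric positive definite such that ½(QA + AᵀQ) is negative definite. Then A can be written as A = (J - R)Q where J = ½(AQ⁻¹ - Q⁻¹Aᵀ) is skew-symmetric and R = -½(AQ⁻¹ + Q⁻¹Aᵀ) is symmetric positive definite. -/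
open Matrix

/-- If `½(QA + AᵀQ)` is negative definite, then `A = (J - R)Q` with
`J = ½(AQ⁻¹ - Q⁻¹Aᵀ)` skew-symmetric and `R = -½(AQ⁻¹ + Q⁻¹Aᵀ)` symmetric
positive definite. -/
theorem stmt_6 (n : ℕ) (A Q : Matrix (Fin n) (Fin n) ℝ) (hQ : Q.PosDef)
    (hneg : (-((1 / 2 : ℝ) • (Q * A + Aᵀ * Q))).PosDef) :
    ((1 / 2 : ℝ) • (A * Q⁻¹ - Q⁻¹ * Aᵀ))ᵀ = -((1 / 2 : ℝ) • (A * Q⁻¹ - Q⁻¹ * Aᵀ)) ∧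
    (-((1 / 2 : ℝ) • (A * Q⁻¹ + Q⁻¹ * Aᵀ)))ᵀ = -((1 / 2 : ℝ) • (A * Q⁻¹ + Q⁻¹ * Aᵀ)) ∧
    (-((1 / 2 : ℝ) • (A * Q⁻¹ + Q⁻¹ * Aᵀ))).PosDef ∧
    A = (((1 / 2 : ℝ) • (A * Q⁻¹ - Q⁻¹ * Aᵀ))
          - (-((1 / 2 : ℝ) • (A * Q⁻¹ + Q⁻¹ * Aᵀ)))) * Q := by
  have hQinv : Q⁻¹.PosDef := hQ.inv
  have hQsymm : Q⁻¹ᵀ = Q⁻¹ := hQinv.isHermitian.eq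
  have hu : IsUnit Q.det := isUnit_iff_ne_zero.2 hQ.det_pos.ne'
  have hui : IsUnit Q⁻¹.det := isUnit_iff_ne_zero.2 hQinv.det_pos.ne'
  have hR : -((1 / 2 : ℝ) • (A * Q⁻¹ + Q⁻¹ * Aᵀ))
      = Q⁻¹ * (-((1 / 2 : ℝ) • (Q * A + Aᵀ * Q))) * Q⁻¹ := by
    rw [Matrix.mul_neg, Matrix.neg_mul, Matrix.mul_smul, Matrix.smul_mul,
      Matrix.mul_add, Matrix.add_mul, ← Matrix.mul_assoc, ← Matrix.mul_assoc,
      Matrix.nonsing_inv_mul _ hu, Matrix.one_mul,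
      Matrix.mul_assoc (Q⁻¹ * Aᵀ) Q Q⁻¹, Matrix.mul_nonsing_inv _ hu, Matrix.mul_one]
  refine ⟨?_, ?_, ?_, ?_⟩
  · rw [transpose_smul, transpose_sub, transpose_mul, transpose_mul,
      transpose_transpose, hQsymm, ← smul_neg, neg_sub]
  · rw [transpose_neg, transpose_smul, transpose_add, transpose_mul, transpose_mul,
      transpose_transpose, hQsymm, add_comm]
  · rw [hR]
    refine PosDef.of_dotProduct_mulVec_pos ?_ (fun x hx => ?_)
    · show _ᴴ = _
      rw [conjTranspose_mul, conjTranspose_mul, hneg.isHermitian.eq,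
        hQinv.isHermitian.eq, Matrix.mul_assoc]
    · have hy : Q⁻¹ *ᵥ x ≠ 0 := by
        intro h
        exact hx (Matrix.mulVec_injective_iff_isUnit.2 ((Matrix.isUnit_iff_isUnit_det _).2 hui) (by simpa using h))
      have := hneg.dotProduct_mulVec_pos hy
      simp only [star_trivial] at this ⊢
      rw [← Matrix.mulVec_mulVec, ← Matrix.mulVec_mulVec, Matrix.dotProduct_mulVec,
        show (x ᵥ* Q⁻¹) = Q⁻¹ *ᵥ x from by rw [← Matrix.vecMul_transpose Q⁻¹ x, hQsymm]]
      exact this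
  · have hkey : ((1 / 2 : ℝ) • (A * Q⁻¹ - Q⁻¹ * Aᵀ))
        - -((1 / 2 : ℝ) • (A * Q⁻¹ + Q⁻¹ * Aᵀ)) = A * Q⁻¹ := by
      rw [sub_neg_eq_add, ← smul_add]
      have h2 : A * Q⁻¹ - Q⁻¹ * Aᵀ + (A * Q⁻¹ + Q⁻¹ * Aᵀ) = (2 : ℝ) • (A * Q⁻¹) := by
        module
      rw [h2, smul_smul]
      norm_num
    rw [hkey, Matrix.mul_assoc, Matrix.nonsing_inv_mul _ hu, Matrix.mul_one]
end

section
/- Consider the translated quadratic system x̃' = Ãx̃ + H(x̃⊗x̃) + B̃ where H is generalized energy-preserving with respect to a symmetric positive definite matrix Q (xᵀQH(x⊗x) = 0 for all x). Let V(x̃) = ½x̃ᵀQx̃. Then along any trajectory, d/dt V(x̃(t)) = x̃(t)ᵀ(QÃ)_s x̃(t) + x̃(t)ᵀQB̃, where (QÃ)_s = ½(QÃ + ÃᵀQ). Consequently, if (QÃ)_s is negative definite, then d/dt V(x̃(t)) < 0 whenever ‖x̃(t)‖ > ‖QB̃‖/σ_min(-(QÃ)_s). -/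
open Matrix

/-- For the translated system `x̃' = Ãx̃ + H(x̃⊗x̃) + B̃` with `H` generalized
energy-preserving w.r.t. `Q`, the function `V(x̃)=½x̃ᵀQx̃` satisfies
`d/dt V = x̃ᵀ(QÃ)_s x̃ + x̃ᵀQB̃`; if `(QÃ)_s` is negative definite then
`d/dt V < 0` whenever `‖x̃‖ > ‖QB̃‖/σ_min(-(QÃ)_s)`. -/
theorem stmt_9 (n : ℕ) (Atil : Matrix (Fin n) (Fin n) ℝ)
    (H : Matrix (Fin n) (Fin n × Fin n) ℝ) (Btil : Fin n → ℝ)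
    (Q : Matrix (Fin n) (Fin n) ℝ) (hQ : Q.PosDef)
    (hH : ∀ x : Fin n → ℝ, x ⬝ᵥ Q.mulVec (H.mulVec (fun p => x p.1 * x p.2)) = 0)
    (x : ℝ → Fin n → ℝ)
    (hx : ∀ t, HasDerivAt x
      (Atil.mulVec (x t) + H.mulVec (fun p => x t p.1 * x t p.2) + Btil) t) :
    (∀ t, deriv (fun s => (1 / 2 : ℝ) * (x s ⬝ᵥ Q.mulVec (x s))) t
      = x t ⬝ᵥ (((1 / 2 : ℝ) • (Q * Atil + Atilᵀ * Q)).mulVec (x t))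
        + x t ⬝ᵥ Q.mulVec Btil) ∧
    ((-((1 / 2 : ℝ) • (Q * Atil + Atilᵀ * Q))).PosDef →
      ∀ σ : ℝ, 0 < σ →
      -- `σ` is the smallest eigenvalue of `-(QÃ)_s`:
      (∀ v : Fin n → ℝ, σ * ∑ i, v i ^ 2
        ≤ v ⬝ᵥ (-((1 / 2 : ℝ) • (Q * Atil + Atilᵀ * Q))).mulVec v) →
      ∀ t, Real.sqrt (∑ i, (x t i) ^ 2)
          > Real.sqrt (∑ i, (Q.mulVec Btil i) ^ 2) / σ →
        deriv (fun s => (1 / 2 : ℝ) * (x s ⬝ᵥ Q.mulVec (x s))) t < 0) := by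
  have hQsymm : Qᵀ = Q := hQ.1.eq
  have hsym : ∀ a b : Fin n → ℝ, a ⬝ᵥ Q.mulVec b = b ⬝ᵥ Q.mulVec a := by
    intro a b
    rw [Matrix.dotProduct_mulVec, ← Matrix.mulVec_transpose, hQsymm, dotProduct_comm]
  have key : ∀ t, deriv (fun s => (1 / 2 : ℝ) * (x s ⬝ᵥ Q.mulVec (x s))) t
      = x t ⬝ᵥ (((1 / 2 : ℝ) • (Q * Atil + Atilᵀ * Q)).mulVec (x t))
        + x t ⬝ᵥ Q.mulVec Btil := by
    intro t
    set x' : Fin n → ℝ :=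
      Atil.mulVec (x t) + H.mulVec (fun p => x t p.1 * x t p.2) + Btil with hx'
    have hcomp : ∀ i : Fin n, HasDerivAt (fun s => x s i) (x' i) t := fun i =>
      ((ContinuousLinearMap.proj i : (Fin n → ℝ) →L[ℝ] ℝ).hasFDerivAt.comp_hasDerivAt t (hx t))
    have hd0 : HasDerivAt (fun s => ∑ i, ∑ j, x s i * (Q i j * x s j))
        (∑ i, ∑ j, (x' i * (Q i j * x t j) + x t i * (Q i j * x' j))) t := by
      refine HasDerivAt.fun_sum fun i _ => HasDerivAt.fun_sum fun j _ => ?_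
      exact (hcomp i).mul ((hcomp j).const_mul (Q i j))
    have hfun : (fun s => x s ⬝ᵥ Q.mulVec (x s)) = fun s => ∑ i, ∑ j, x s i * (Q i j * x s j) := by
      funext s
      simp [dotProduct, Matrix.mulVec, Finset.mul_sum]
    have hval : (∑ i, ∑ j, (x' i * (Q i j * x t j) + x t i * (Q i j * x' j)))
        = x' ⬝ᵥ Q.mulVec (x t) + x t ⬝ᵥ Q.mulVec x' := by
      simp [dotProduct, Matrix.mulVec, Finset.mul_sum, ← Finset.sum_add_distrib]
    have h1 : HasDerivAt (fun s => x s ⬝ᵥ Q.mulVec (x s))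
        (x' ⬝ᵥ Q.mulVec (x t) + x t ⬝ᵥ Q.mulVec x') t := by
      rw [hfun, ← hval]; exact hd0
    have h2 := h1.const_mul (1 / 2 : ℝ)
    rw [h2.deriv]
    have hs : x' ⬝ᵥ Q.mulVec (x t) = x t ⬝ᵥ Q.mulVec x' := hsym _ _
    rw [hs]
    have hexp : x t ⬝ᵥ Q.mulVec x' = x t ⬝ᵥ Q.mulVec (Atil.mulVec (x t)) + x t ⬝ᵥ Q.mulVec Btil := by
      rw [hx']
      simp only [Matrix.mulVec_add, dotProduct_add]
      rw [hH (x t)]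
      ring
    have hqa : x t ⬝ᵥ (((1 / 2 : ℝ) • (Q * Atil + Atilᵀ * Q)).mulVec (x t))
        = x t ⬝ᵥ Q.mulVec (Atil.mulVec (x t)) := by
      rw [Matrix.smul_mulVec, Matrix.add_mulVec, dotProduct_smul,
        dotProduct_add, ← Matrix.mulVec_mulVec, ← Matrix.mulVec_mulVec]
      have : x t ⬝ᵥ Atilᵀ.mulVec (Q.mulVec (x t)) = x t ⬝ᵥ Q.mulVec (Atil.mulVec (x t)) := by
        rw [Matrix.dotProduct_mulVec, Matrix.vecMul_transpose, hsym]
      rw [this, smul_eq_mul]; ring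
    rw [hexp, hqa]
    ring
  refine ⟨key, ?_⟩
  intro _ σ hσ hσmin t hnorm
  rw [key t]
  set u := x t with hu
  set w := Q.mulVec Btil with hw
  set a := Real.sqrt (∑ i, u i ^ 2) with ha
  set b := Real.sqrt (∑ i, w i ^ 2) with hb
  have ha0 : 0 ≤ a := Real.sqrt_nonneg _
  have hb0 : 0 ≤ b := Real.sqrt_nonneg _
  have hapos : 0 < a := lt_of_le_of_lt (div_nonneg hb0 hσ.le) hnorm
  have hsq : ∑ i, u i ^ 2 = a ^ 2 := (Real.sq_sqrt (Finset.sum_nonneg fun i _ => sq_nonneg _)).symm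
  -- quadratic term bound
  have hquad : u ⬝ᵥ (((1 / 2 : ℝ) • (Q * Atil + Atilᵀ * Q)).mulVec u) ≤ -(σ * a ^ 2) := by
    have := hσmin u
    rw [Matrix.neg_mulVec, dotProduct_neg] at this
    rw [hsq] at this
    linarith
  -- Cauchy-Schwarz
  have hcs : u ⬝ᵥ w ≤ a * b := by
    have h2 : (u ⬝ᵥ w) ^ 2 ≤ (∑ i, u i ^ 2) * ∑ i, w i ^ 2 :=
      Finset.sum_mul_sq_le_sq_mul_sq _ _ _
    calc u ⬝ᵥ w ≤ |u ⬝ᵥ w| := le_abs_self _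
      _ = Real.sqrt ((u ⬝ᵥ w) ^ 2) := (Real.sqrt_sq_eq_abs _).symm
      _ ≤ Real.sqrt ((∑ i, u i ^ 2) * ∑ i, w i ^ 2) := Real.sqrt_le_sqrt h2
      _ = a * b := by
          rw [Real.sqrt_mul (Finset.sum_nonneg fun i _ => sq_nonneg _)]
  have hba : b < σ * a := by
    have := (div_lt_iff₀ hσ).mp hnorm
    linarith [mul_comm a σ]
  nlinarith [hquad, hcs, hapos]
end

section
/- Let H ∈ ℝ^{n×n²} satisfy xᵀH(x⊗x) = 0 for all x ∈ ℝⁿ (energy-preserving). Then there exists a matrix H̃ = [H₁, ..., Hₙ] ∈ ℝ^{n×n²} with each block Hᵢ ∈ ℝ^{n×n} skew-symmetric, such that H(x⊗x) = H̃(x⊗x) for every x ∈ ℝⁿ. -/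
open Matrix

private lemma sum_single_mul {n : ℕ} (i : Fin n) (g : Fin n → ℝ) :
    ∑ a, (Pi.single i (1:ℝ) : Fin n → ℝ) a * g a = g i := by
  simp [Pi.single_apply]

/-- Polarization: if the cubic form vanishes identically, the symmetrized
coefficient contraction vanishes. -/
private lemma polar {n : ℕ} (T : Fin n → Fin n → Fin n → ℝ)
    (hT : ∀ x : Fin n → ℝ, ∑ a, ∑ b, ∑ c, x a * x b * x c * T a b c = 0)
    (x : Fin n → ℝ) (i : Fin n) :
    (∑ b, ∑ c, x b * x c * T i b c) + (∑ a, ∑ c, x a * x c * T a i c)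
      + (∑ a, ∑ b, x a * x b * T a b i) = 0 := by
  set δ : Fin n → ℝ := Pi.single i 1 with hδ
  have hexp : ∀ y : Fin n → ℝ,
      (∑ a, ∑ b, ∑ c, (x a + y a) * (x b + y b) * (x c + y c) * T a b c)
      = (∑ a, ∑ b, ∑ c, x a * x b * x c * T a b c)
      + ((∑ a, ∑ b, ∑ c, y a * x b * x c * T a b c)
        + (∑ a, ∑ b, ∑ c, x a * y b * x c * T a b c)
        + (∑ a, ∑ b, ∑ c, x a * x b * y c * T a b c))
      + ((∑ a, ∑ b, ∑ c, x a * y b * y c * T a b c)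
        + (∑ a, ∑ b, ∑ c, y a * x b * y c * T a b c)
        + (∑ a, ∑ b, ∑ c, y a * y b * x c * T a b c))
      + (∑ a, ∑ b, ∑ c, y a * y b * y c * T a b c) := by
    intro y
    simp only [add_mul, mul_add, Finset.sum_add_distrib]
    ring
  have h1 := hT (x + δ)
  have h2 := hT (x - δ)
  have h3 := hT δ
  have hx := hT x
  rw [show x + δ = fun j => x j + δ j from rfl] at h1
  rw [show x - δ = fun j => x j + (-δ) j from by funext j; simp [sub_eq_add_neg]] at h2
  simp only [hexp] at h1 h2
  simp only [Pi.neg_apply, neg_mul, mul_neg, neg_neg, Finset.sum_neg_distrib] at h2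
  -- A1, A2, A3 : the single-δ contractions
  have hA1 : (∑ a, ∑ b, ∑ c, δ a * x b * x c * T a b c)
      = ∑ b, ∑ c, x b * x c * T i b c := by
    have : ∀ a, (∑ b, ∑ c, δ a * x b * x c * T a b c)
        = δ a * ∑ b, ∑ c, x b * x c * T a b c := by
      intro a; rw [Finset.mul_sum]; refine Finset.sum_congr rfl fun b _ => ?_
      rw [Finset.mul_sum]; refine Finset.sum_congr rfl fun c _ => ?_; ring
    simp only [this]
    exact sum_single_mul i _
  have hA2 : (∑ a, ∑ b, ∑ c, x a * δ b * x c * T a b c)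
      = ∑ a, ∑ c, x a * x c * T a i c := by
    refine Finset.sum_congr rfl fun a _ => ?_
    have : ∀ b, (∑ c, x a * δ b * x c * T a b c)
        = δ b * ∑ c, x a * x c * T a b c := by
      intro b; rw [Finset.mul_sum]; refine Finset.sum_congr rfl fun c _ => ?_; ring
    simp only [this]
    exact sum_single_mul i _
  have hA3 : (∑ a, ∑ b, ∑ c, x a * x b * δ c * T a b c)
      = ∑ a, ∑ b, x a * x b * T a b i := by
    refine Finset.sum_congr rfl fun a _ => Finset.sum_congr rfl fun b _ => ?_
    have : ∀ c, x a * x b * δ c * T a b c = δ c * (x a * x b * T a b c) := by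
      intro c; ring
    simp only [this]
    exact sum_single_mul i _
  rw [hA1, hA2, hA3] at h1 h2
  linarith

/-- Every energy-preserving `H` admits an equivalent representation with
skew-symmetric blocks. -/
theorem stmt_11 (n : ℕ) (H : Matrix (Fin n) (Fin n × Fin n) ℝ)
    (hH : ∀ x : Fin n → ℝ, x ⬝ᵥ H.mulVec (fun p => x p.1 * x p.2) = 0) :
    ∃ Hs : Fin n → Matrix (Fin n) (Fin n) ℝ,
      (∀ i, (Hs i)ᵀ = -(Hs i)) ∧
      ∀ x : Fin n → ℝ,
        H.mulVec (fun p => x p.1 * x p.2) = ∑ i, x i • (Hs i).mulVec x := by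
  refine ⟨fun k => Matrix.of fun a b =>
      (1/3) * (H a (b, k) + H a (k, b) - H b (a, k) - H b (k, a)), ?_, ?_⟩
  · intro k
    ext a b
    simp [Matrix.transpose_apply, Matrix.neg_apply]
    ring
  · intro x
    set T : Fin n → Fin n → Fin n → ℝ := fun a b c => H a (b, c) with hT
    have hcubic : ∀ y : Fin n → ℝ,
        ∑ a, ∑ b, ∑ c, y a * y b * y c * T a b c = 0 := by
      intro y
      have := hH y
      rw [dotProduct] at this
      simp only [Matrix.mulVec, dotProduct, Fintype.sum_prod_type] at this
      rw [← this]
      refine Finset.sum_congr rfl fun a _ => ?_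
      rw [Finset.mul_sum]
      refine Finset.sum_congr rfl fun b _ => ?_
      rw [Finset.mul_sum]
      refine Finset.sum_congr rfl fun c _ => ?_
      ring
    funext a
    have key := polar T hcubic x a
    -- S1 + S2 + S3 = 0
    set S1 : ℝ := ∑ b, ∑ c, x b * x c * T a b c with hS1
    set S2 : ℝ := ∑ j, ∑ c, x j * x c * T j a c with hS2
    set S3 : ℝ := ∑ j, ∑ b, x j * x b * T j b a with hS3
    -- LHS = S1
    have hL : H.mulVec (fun p => x p.1 * x p.2) a = S1 := by
      simp only [Matrix.mulVec, dotProduct, Fintype.sum_prod_type, hS1, hT]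
      refine Finset.sum_congr rfl fun b _ => Finset.sum_congr rfl fun c _ => ?_
      ring
    -- RHS = (1/3) * (2*S1 - S2 - S3)
    have hR : (∑ i, x i • ((fun k => Matrix.of fun a b =>
        (1/3) * (H a (b, k) + H a (k, b) - H b (a, k) - H b (k, a)) : Fin n → Matrix (Fin n) (Fin n) ℝ) i).mulVec x) a
        = (1/3) * (S1 + S1 - S2 - S3) := by
      simp only [Finset.sum_apply, Pi.smul_apply, Matrix.mulVec, dotProduct,
        Matrix.of_apply, smul_eq_mul]
      have e1 : (∑ k, x k * ∑ b, (1/3) * (H a (b, k) + H a (k, b) - H b (a, k) - H b (k, a)) * x b)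
          = (1/3) * ((∑ k, ∑ b, x k * x b * H a (b, k))
            + (∑ k, ∑ b, x k * x b * H a (k, b))
            - (∑ k, ∑ b, x k * x b * H b (a, k))
            - (∑ k, ∑ b, x k * x b * H b (k, a))) := by
        rw [← Finset.sum_add_distrib, ← Finset.sum_sub_distrib, ← Finset.sum_sub_distrib,
          Finset.mul_sum]
        refine Finset.sum_congr rfl fun k _ => ?_
        rw [← Finset.sum_add_distrib, ← Finset.sum_sub_distrib, ← Finset.sum_sub_distrib,
          Finset.mul_sum, Finset.mul_sum]
        refine Finset.sum_congr rfl fun b _ => ?_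
        ring
      rw [e1]
      congr 1
      have c1 : (∑ k, ∑ b, x k * x b * H a (b, k)) = S1 := by
        rw [hS1, Finset.sum_comm]
        exact Finset.sum_congr rfl fun b _ => Finset.sum_congr rfl fun k _ => by
          simp only [hT]; ring
      have c2 : (∑ k, ∑ b, x k * x b * H a (k, b)) = S1 := by
        rw [hS1]
      have c3 : (∑ k, ∑ b, x k * x b * H b (a, k)) = S2 := by
        rw [hS2, Finset.sum_comm]
        exact Finset.sum_congr rfl fun b _ => Finset.sum_congr rfl fun k _ => by
          simp only [hT]; ring
      have c4 : (∑ k, ∑ b, x k * x b * H b (k, a)) = S3 := by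
        rw [hS3, Finset.sum_comm]
        exact Finset.sum_congr rfl fun b _ => Finset.sum_congr rfl fun k _ => by
          simp only [hT]; ring
      rw [c1, c2, c3, c4]
    rw [hL, hR]
    linarith
end

section
/- Let Q = LᵀL be symmetric positive definite (L invertible), and let H ∈ ℝ^{n×n²} satisfy xᵀQH(x⊗x) = 0 for all x ∈ ℝⁿ. Then there exist skew-symmetric matrices G₁, ..., Gₙ ∈ ℝ^{n×n} such that H(x⊗x) = [G₁Q, ..., GₙQ](x⊗x) for all x ∈ ℝⁿ. -/
open Matrix

private def triB {n : ℕ} (T : Fin n → Fin n → Fin n → ℝ) (a b c : Fin n → ℝ) : ℝ :=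
  ∑ j, ∑ i, ∑ k, T j i k * a j * b i * c k

private lemma triB_add_left {n : ℕ} (T : Fin n → Fin n → Fin n → ℝ) (u v b c : Fin n → ℝ) :
    triB T (u + v) b c = triB T u b c + triB T v b c := by
  simp [triB, Pi.add_apply, mul_add, add_mul, Finset.sum_add_distrib]

private lemma triB_add_mid {n : ℕ} (T : Fin n → Fin n → Fin n → ℝ) (a u v c : Fin n → ℝ) :
    triB T a (u + v) c = triB T a u c + triB T a v c := by
  simp [triB, Pi.add_apply, mul_add, add_mul, Finset.sum_add_distrib]

private lemma triB_add_right {n : ℕ} (T : Fin n → Fin n → Fin n → ℝ) (a b u v : Fin n → ℝ) :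
    triB T a b (u + v) = triB T a b u + triB T a b v := by
  simp [triB, Pi.add_apply, mul_add, Finset.sum_add_distrib]

private lemma triB_single {n : ℕ} (T : Fin n → Fin n → Fin n → ℝ) (a b c : Fin n) :
    triB T (Pi.single a 1) (Pi.single b 1) (Pi.single c 1) = T a b c := by
  simp [triB, Pi.single_apply, mul_ite, ite_mul, mul_one, mul_zero, zero_mul,
    Finset.sum_ite_eq, Finset.sum_ite_eq']

private lemma sym_zero {n : ℕ} (T : Fin n → Fin n → Fin n → ℝ)
    (h : ∀ x : Fin n → ℝ, ∑ j, ∑ i, ∑ k, T j i k * x j * x i * x k = 0) :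
    ∀ i j k, T i j k + T i k j + T j i k + T j k i + T k i j + T k j i = 0 := by
  have hB : ∀ x : Fin n → ℝ, triB T x x x = 0 := h
  intro i j k
  have h3 := hB (Pi.single i 1 + Pi.single j 1 + Pi.single k 1)
  have hij := hB (Pi.single i 1 + Pi.single j 1)
  have hik := hB (Pi.single i 1 + Pi.single k 1)
  have hjk := hB (Pi.single j 1 + Pi.single k 1)
  have hi := hB (Pi.single i 1)
  have hj := hB (Pi.single j 1)
  have hk := hB (Pi.single k 1)
  simp only [triB_add_left, triB_add_mid, triB_add_right, triB_single] at h3 hij hik hjk hi hj hk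
  linarith

private lemma skew_sum {n : ℕ} (D : Fin n → Fin n → ℝ) (x : Fin n → ℝ)
    (h : ∀ i k, D i k + D k i = 0) :
    ∑ i, ∑ k, D i k * x i * x k = 0 := by
  have h1 : ∑ i, ∑ k, D k i * x i * x k = ∑ i, ∑ k, D i k * x i * x k := by
    rw [Finset.sum_comm]
    refine Finset.sum_congr rfl fun i _ => Finset.sum_congr rfl fun kk _ => by ring
  have h2 : ∑ i, ∑ k, (D i k + D k i) * x i * x k = 0 := by
    refine Finset.sum_eq_zero fun i _ => Finset.sum_eq_zero fun kk _ => by rw [h i kk]; ring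
  have h3 : ∑ i, ∑ k, (D i k + D k i) * x i * x k
      = ∑ i, ∑ k, D i k * x i * x k + ∑ i, ∑ k, D k i * x i * x k := by
    simp [add_mul, Finset.sum_add_distrib]
  linarith

/-- Every generalized energy-preserving `H` w.r.t. `Q = LᵀL` (with `L`
invertible) admits an equivalent representation with blocks `GᵢQ`, `Gᵢ`
skew-symmetric. -/
theorem stmt_12 (n : ℕ) (L : Matrix (Fin n) (Fin n) ℝ) (hL : IsUnit L.det)
    (H : Matrix (Fin n) (Fin n × Fin n) ℝ)
    (hH : ∀ x : Fin n → ℝ,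
      x ⬝ᵥ (Lᵀ * L).mulVec (H.mulVec (fun p => x p.1 * x p.2)) = 0) :
    ∃ G : Fin n → Matrix (Fin n) (Fin n) ℝ,
      (∀ i, (G i)ᵀ = -(G i)) ∧
      ∀ x : Fin n → ℝ,
        H.mulVec (fun p => x p.1 * x p.2)
          = ∑ i, x i • ((G i) * (Lᵀ * L)).mulVec x := by
  set Q : Matrix (Fin n) (Fin n) ℝ := Lᵀ * L with hQdef
  have hQ : IsUnit Q.det := by
    rw [hQdef, det_mul, det_transpose]; exact hL.mul hL
  have hQsymm : Qᵀ = Q := by rw [hQdef, transpose_mul, transpose_transpose]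
  have hQinvsymm : (Q⁻¹)ᵀ = Q⁻¹ := by rw [transpose_nonsing_inv, hQsymm]
  set M : Matrix (Fin n) (Fin n × Fin n) ℝ := Q * H with hMdef
  set T : Fin n → Fin n → Fin n → ℝ := fun j i k => M j (i, k) with hTdef
  have hT : ∀ x : Fin n → ℝ, ∑ j, ∑ i, ∑ k, T j i k * x j * x i * x k = 0 := by
    intro x
    have h0 := hH x
    rw [Matrix.mulVec_mulVec, ← hMdef] at h0
    calc ∑ j, ∑ i, ∑ k, T j i k * x j * x i * x k
        = x ⬝ᵥ M.mulVec (fun p => x p.1 * x p.2) := by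
          simp only [dotProduct, mulVec, Finset.mul_sum, Fintype.sum_prod_type]
          refine Finset.sum_congr rfl fun j _ => Finset.sum_congr rfl fun i _ =>
            Finset.sum_congr rfl fun k _ => by simp [hTdef]; ring
      _ = 0 := h0
  have hsym := sym_zero T hT
  set Ghat : Fin n → Matrix (Fin n) (Fin n) ℝ :=
    fun i => Matrix.of fun j k => (T j i k + T j k i - T k i j - T k j i) / 3 with hGhatdef
  have hGhat_sum : ∀ i j k, Ghat i j k + Ghat k j i = T j i k + T j k i := by
    intro i j k
    have := hsym i j k
    simp only [hGhatdef, Matrix.of_apply]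
    linarith
  have key : ∀ x : Fin n → ℝ,
      M.mulVec (fun p => x p.1 * x p.2) = ∑ i, x i • (Ghat i).mulVec x := by
    intro x
    funext j
    have hz : ∑ i, ∑ k, (T j i k - Ghat i j k) * x i * x k = 0 := by
      refine skew_sum _ x fun i k => ?_
      have := hGhat_sum i j k
      linarith
    have hsplit : ∑ i, ∑ k, (T j i k - Ghat i j k) * x i * x k
        = ∑ i, ∑ k, T j i k * x i * x k - ∑ i, ∑ k, Ghat i j k * x i * x k := by
      simp [sub_mul, Finset.sum_sub_distrib]
    have heq : ∑ i, ∑ k, T j i k * x i * x k = ∑ i, ∑ k, Ghat i j k * x i * x k := by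
      rw [hsplit] at hz; linarith
    calc M.mulVec (fun p => x p.1 * x p.2) j
        = ∑ i, ∑ k, T j i k * x i * x k := by
          simp only [mulVec, dotProduct, Fintype.sum_prod_type]
          refine Finset.sum_congr rfl fun i _ => Finset.sum_congr rfl fun k _ => by ring
      _ = ∑ i, ∑ k, Ghat i j k * x i * x k := heq
      _ = (∑ i, x i • (Ghat i).mulVec x) j := by
          simp only [Finset.sum_apply, Pi.smul_apply, smul_eq_mul, mulVec, dotProduct,
            Finset.mul_sum]
          refine Finset.sum_congr rfl fun i _ => Finset.sum_congr rfl fun k _ => by ring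
  refine ⟨fun i => Q⁻¹ * Ghat i * Q⁻¹, ?_, ?_⟩
  · intro i
    have hGskew : (Ghat i)ᵀ = -(Ghat i) := by
      ext j k
      simp only [transpose_apply, hGhatdef, Matrix.of_apply, Pi.neg_apply, Matrix.neg_apply]
      ring
    rw [transpose_mul, transpose_mul, hQinvsymm, hGskew]
    simp [Matrix.mul_assoc, Matrix.mul_neg, Matrix.neg_mul]
  · intro x
    have hGQ : ∀ i, (Q⁻¹ * Ghat i * Q⁻¹) * Q = Q⁻¹ * Ghat i := by
      intro i
      rw [Matrix.mul_assoc, Matrix.nonsing_inv_mul Q hQ, Matrix.mul_one]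
    have hHM : H.mulVec (fun p => x p.1 * x p.2)
        = Q⁻¹.mulVec (M.mulVec (fun p => x p.1 * x p.2)) := by
      rw [Matrix.mulVec_mulVec, hMdef, ← Matrix.mul_assoc, Matrix.nonsing_inv_mul Q hQ,
        Matrix.one_mul]
    rw [hHM, key]
    rw [show Q⁻¹.mulVec (∑ i, x i • (Ghat i).mulVec x)
        = ∑ i, x i • Q⁻¹.mulVec ((Ghat i).mulVec x) from by
      rw [← Matrix.mulVecLin_apply]
      rw [map_sum]
      refine Finset.sum_congr rfl fun i _ => ?_
      simp [Matrix.mulVecLin_apply, Matrix.mulVec_smul]]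
    refine Finset.sum_congr rfl fun i _ => ?_
    rw [hGQ i, ← Matrix.mulVec_mulVec]
end

section
/- Let H ∈ ℝ^{n×n²} be such that all its frontal-slice blocks are of the form HᵢQ with Hᵢ skew-symmetric and Q symmetric positive definite, i.e., H = [H₁Q, ..., HₙQ]. Let A = (J - R)Q with J skew-symmetric and R symmetric positive semi-definite (R ⪰ 0). Then for the system ẋ = Ax + H(x⊗x), the function V(x) = ½xᵀQx is non-increasing along all trajectories: d/dt V(x(t)) = -x(t)ᵀQRQx(t) ≤ 0. If additionally R = 0, then V is constant along all trajectories. -/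
open Matrix

lemma skew_quad_s15 {n : ℕ} (A : Matrix (Fin n) (Fin n) ℝ) (hA : Aᵀ = -A)
    (y : Fin n → ℝ) : y ⬝ᵥ A.mulVec y = 0 := by
  have h1 : y ⬝ᵥ A.mulVec y = (Aᵀ.mulVec y) ⬝ᵥ y := by
    rw [dotProduct_mulVec, mulVec_transpose]
  have h2 : (Aᵀ.mulVec y) ⬝ᵥ y = -(y ⬝ᵥ A.mulVec y) := by
    rw [hA, neg_mulVec, neg_dotProduct, dotProduct_comm]
  linarith [h1, h2]

lemma sum_dp {n m : ℕ} (f : Fin m → Fin n → ℝ) (w : Fin n → ℝ) :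
    (∑ i, f i) ⬝ᵥ w = ∑ i, f i ⬝ᵥ w := by
  simp only [dotProduct, Finset.sum_apply, Finset.sum_mul]
  exact Finset.sum_comm

lemma hasDerivAt_quad {n : ℕ} (Q : Matrix (Fin n) (Fin n) ℝ)
    (x : ℝ → Fin n → ℝ) (v : Fin n → ℝ) (t : ℝ) (hx : HasDerivAt x v t) :
    HasDerivAt (fun s => x s ⬝ᵥ Q.mulVec (x s))
      (v ⬝ᵥ Q.mulVec (x t) + x t ⬝ᵥ Q.mulVec v) t := by
  have hxi : ∀ i, HasDerivAt (fun s => x s i) (v i) t := by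
    rw [← hasDerivAt_pi]; exact hx
  have h : HasDerivAt (fun s => ∑ i, x s i * ∑ j, Q i j * x s j)
      (∑ i, (v i * ∑ j, Q i j * x t j + x t i * ∑ j, Q i j * v j)) t := by
    apply HasDerivAt.fun_sum
    intro i _
    exact (hxi i).mul (HasDerivAt.fun_sum (fun j _ => (hxi j).const_mul (Q i j)))
  have hfun : (fun s => x s ⬝ᵥ Q.mulVec (x s))
      = fun s => ∑ i, x s i * ∑ j, Q i j * x s j := by
    funext s; simp [dotProduct, mulVec]
  rw [hfun]
  convert h using 1
  rw [Finset.sum_add_distrib]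
  simp [dotProduct, mulVec]

/-- For `ẋ = (J-R)Qx + Σᵢ xᵢHᵢQx` with `J` skew, `R ⪰ 0` symmetric, `Q ≻ 0`
symmetric, and `Hᵢ` skew-symmetric, the function `V(x)=½xᵀQx` satisfies
`d/dt V(x(t)) = -x(t)ᵀQRQx(t) ≤ 0`; if `R = 0` then `V` is constant along
trajectories. -/
theorem stmt_15 (n : ℕ) (J R Q : Matrix (Fin n) (Fin n) ℝ)
    (hJ : Jᵀ = -J) (hR : R.PosSemidef) (hQ : Q.PosDef)
    (Hs : Fin n → Matrix (Fin n) (Fin n) ℝ) (hskew : ∀ i, (Hs i)ᵀ = -(Hs i))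
    (x : ℝ → Fin n → ℝ)
    (hx : ∀ t, HasDerivAt x
      (((J - R) * Q).mulVec (x t) + ∑ i, x t i • (Hs i * Q).mulVec (x t)) t) :
    (∀ t, deriv (fun s => (1 / 2 : ℝ) * (x s ⬝ᵥ Q.mulVec (x s))) t
        = -(x t ⬝ᵥ (Q * R * Q).mulVec (x t)) ∧
      deriv (fun s => (1 / 2 : ℝ) * (x s ⬝ᵥ Q.mulVec (x s))) t ≤ 0) ∧
    (R = 0 → ∀ t₁ t₂ : ℝ,
      (1 / 2 : ℝ) * (x t₁ ⬝ᵥ Q.mulVec (x t₁))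
        = (1 / 2 : ℝ) * (x t₂ ⬝ᵥ Q.mulVec (x t₂))) := by
  have hQs : Qᵀ = Q := hQ.isHermitian
  set v : ℝ → Fin n → ℝ := fun t =>
    ((J - R) * Q).mulVec (x t) + ∑ i, x t i • (Hs i * Q).mulVec (x t) with hv
  have hxQ : ∀ t, x t ⬝ᵥ (Q * R * Q).mulVec (x t)
      = (Q.mulVec (x t)) ⬝ᵥ R.mulVec (Q.mulVec (x t)) := by
    intro t
    rw [← mulVec_mulVec, ← mulVec_mulVec, dotProduct_mulVec, ← mulVec_transpose, hQs]
  have hmain : ∀ t, v t ⬝ᵥ Q.mulVec (x t)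
      = -(Q.mulVec (x t) ⬝ᵥ R.mulVec (Q.mulVec (x t))) := by
    intro t
    rw [hv]
    simp only [add_dotProduct, sum_dp, smul_dotProduct,
      ← mulVec_mulVec, sub_mulVec, sub_dotProduct]
    have hJ0 : J.mulVec (Q.mulVec (x t)) ⬝ᵥ Q.mulVec (x t) = 0 := by
      rw [dotProduct_comm]; exact skew_quad_s15 J hJ _
    have hH0 : ∀ i, (Hs i).mulVec (Q.mulVec (x t)) ⬝ᵥ Q.mulVec (x t) = 0 := by
      intro i; rw [dotProduct_comm]; exact skew_quad_s15 _ (hskew i) _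
    rw [hJ0]
    rw [Finset.sum_eq_zero (fun i _ => by rw [hH0 i, smul_zero])]
    rw [dotProduct_comm]
    ring
  have key : ∀ t, HasDerivAt (fun s => (1 / 2 : ℝ) * (x s ⬝ᵥ Q.mulVec (x s)))
      (-(x t ⬝ᵥ (Q * R * Q).mulVec (x t))) t := by
    intro t
    have h := (hasDerivAt_quad Q x (v t) t (hx t)).const_mul (1 / 2 : ℝ)
    have hsym : x t ⬝ᵥ Q.mulVec (v t) = v t ⬝ᵥ Q.mulVec (x t) := by
      rw [dotProduct_mulVec, ← mulVec_transpose, hQs, dotProduct_comm]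
    rw [hsym] at h
    refine h.congr_deriv ?_
    rw [hmain t, hxQ t]
    ring
  constructor
  · intro t
    have hd := (key t).deriv
    refine ⟨hd, ?_⟩
    rw [hd, hxQ t]
    simpa using hR.dotProduct_mulVec_nonneg (Q.mulVec (x t))
  · intro hR0 t₁ t₂
    exact is_const_of_deriv_eq_zero
      (f := fun s => (1 / 2 : ℝ) * (x s ⬝ᵥ Q.mulVec (x s)))
      (fun s => (key s).differentiableAt)
      (fun s => by rw [(key s).deriv, hR0]; simp) t₁ t₂
end
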